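/- arXiv:1204.3938 — 3 statements merged into one kernel-verified Lean document; each statement's English description precedes it below -/
import Mathlib

section
/- Let m ∈ (1,2) and let η be a real number with |η| ≤ 1/2. Then (1+η)^m ≥ 1 + m·η + (m(m-1)/2)·(2/3)^{2-m}·η². -/
theorem pointwise_lower_bound_rpow (m η : ℝ) (hm1 : 1 < m) (hm2 : m < 2)
    (hη : |η| ≤ 1 / 2) :
    (1 + η) ^ m ≥ 1 + m * η + (m * (m - 1) / 2) * ((2:ℝ) / 3) ^ (2 - m) * η ^ 2 := by
  obtain ⟨hη1, hη2⟩ := abs_le.mp hη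
  set C : ℝ := m * (m - 1) / 2 * ((2:ℝ) / 3) ^ (2 - m) with hC
  set f : ℝ → ℝ := fun x => (1 + x) ^ m - (1 + m * x + C * x ^ 2) with hf
  set f1 : ℝ → ℝ := fun x => m * (1 + x) ^ (m - 1) - (m + 2 * C * x) with hf1
  have hderiv : ∀ x : ℝ, -1 < x → HasDerivAt f (f1 x) x := by
    intro x hx
    have hpos : (0:ℝ) < 1 + x := by linarith
    have h1 : HasDerivAt (fun y : ℝ => (1 + y) ^ m) (m * (1 + x) ^ (m - 1)) x := by
      have hr := Real.hasDerivAt_rpow_const (x := 1 + x) (p := m) (Or.inl (ne_of_gt hpos))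
      have hg : HasDerivAt (fun y : ℝ => 1 + y) 1 x := (hasDerivAt_id x).const_add 1
      have := hr.comp x hg
      simpa [Function.comp_def] using this
    have h2 : HasDerivAt (fun y : ℝ => 1 + m * y + C * y ^ 2) (m + 2 * C * x) x := by
      have ha : HasDerivAt (fun y : ℝ => 1 + m * y) m x := by
        simpa using ((hasDerivAt_id x).const_mul m).const_add 1
      have hb : HasDerivAt (fun y : ℝ => C * y ^ 2) (C * (2 * x)) x := by
        simpa using (hasDerivAt_pow 2 x).const_mul C
      have := ha.add hb
      convert this using 1 <;> first | rfl | ring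
    exact h1.sub h2
  have hderiv1 : ∀ x : ℝ, -1 < x →
      HasDerivAt f1 (m * ((m - 1) * (1 + x) ^ (m - 2)) - 2 * C) x := by
    intro x hx
    have hpos : (0:ℝ) < 1 + x := by linarith
    have hr := Real.hasDerivAt_rpow_const (x := 1 + x) (p := m - 1) (Or.inl (ne_of_gt hpos))
    have hg : HasDerivAt (fun y : ℝ => 1 + y) 1 x := (hasDerivAt_id x).const_add 1
    have h1 : HasDerivAt (fun y : ℝ => (1 + y) ^ (m - 1)) ((m - 1) * (1 + x) ^ (m - 1 - 1)) x := by
      simpa [Function.comp_def] using hr.comp x hg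
    have h1' : HasDerivAt (fun y : ℝ => m * (1 + y) ^ (m - 1))
        (m * ((m - 1) * (1 + x) ^ (m - 2))) x := by
      have := h1.const_mul m
      convert this using 2 <;> first | rfl | ring_nf
    have h2 : HasDerivAt (fun y : ℝ => m + 2 * C * y) (2 * C) x := by
      simpa using ((hasDerivAt_id x).const_mul (2 * C)).const_add m
    exact h1'.sub h2
  have hmm : (0:ℝ) < m * (m - 1) := by nlinarith
  have hkey : ∀ x ∈ Set.Icc (-(1/2):ℝ) (1/2), 2 * C ≤ m * (m - 1) * (1 + x) ^ (m - 2) := by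
    intro x hx
    obtain ⟨hx1, hx2⟩ := hx
    have hpos : (0:ℝ) < 1 + x := by linarith
    have hexp : (0:ℝ) ≤ 2 - m := by linarith
    have hle : (1 + x) ^ (2 - m) ≤ ((3:ℝ)/2) ^ (2 - m) :=
      Real.rpow_le_rpow (le_of_lt hpos) (by linarith) hexp
    have hpos2 : (0:ℝ) < (1 + x) ^ (2 - m) := Real.rpow_pos_of_pos hpos _
    have hinv : (((3:ℝ)/2) ^ (2 - m))⁻¹ ≤ ((1 + x) ^ (2 - m))⁻¹ :=
      inv_anti₀ hpos2 hle
    have heq1 : (1 + x) ^ (m - 2) = ((1 + x) ^ (2 - m))⁻¹ := by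
      rw [show m - 2 = -(2 - m) by ring, Real.rpow_neg (le_of_lt hpos)]
    have heq2 : ((2:ℝ)/3) ^ (2 - m) = (((3:ℝ)/2) ^ (2 - m))⁻¹ := by
      rw [show (2:ℝ)/3 = ((3:ℝ)/2)⁻¹ by norm_num, Real.inv_rpow (by norm_num)]
    have : ((2:ℝ)/3) ^ (2 - m) ≤ (1 + x) ^ (m - 2) := by rw [heq1, heq2]; exact hinv
    have h2C : 2 * C = m * (m - 1) * ((2:ℝ)/3) ^ (2 - m) := by rw [hC]; ring
    rw [h2C]
    exact mul_le_mul_of_nonneg_left this (le_of_lt hmm)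
  have hIcc : ∀ x ∈ Set.Icc (-(1/2):ℝ) (1/2), (-1:ℝ) < x := by
    intro x hx; have := hx.1; linarith
  -- f1 is monotone on [-1/2, 1/2]
  have hmono1 : MonotoneOn f1 (Set.Icc (-(1/2):ℝ) (1/2)) := by
    apply monotoneOn_of_deriv_nonneg (convex_Icc _ _)
    · intro x hx
      exact ((hderiv1 x (hIcc x hx)).differentiableAt).continuousAt.continuousWithinAt
    · intro x hx
      rw [interior_Icc] at hx
      exact ((hderiv1 x (hIcc x (Set.mem_Icc_of_Ioo hx))).differentiableAt).differentiableWithinAt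
    · intro x hx
      rw [interior_Icc] at hx
      have hx' := Set.mem_Icc_of_Ioo hx
      rw [(hderiv1 x (hIcc x hx')).deriv]
      have := hkey x hx'
      linarith [this]
  have hf10 : f1 0 = 0 := by
    simp [hf1, Real.one_rpow]
  have hzero_mem : (0:ℝ) ∈ Set.Icc (-(1/2):ℝ) (1/2) := by constructor <;> norm_num
  -- f is antitone on [-1/2, 0] and monotone on [0, 1/2]
  have hcont : ∀ s ⊆ Set.Icc (-(1/2):ℝ) (1/2), ContinuousOn f s := by
    intro s hs x hx
    exact ((hderiv x (hIcc x (hs hx))).differentiableAt).continuousAt.continuousWithinAt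
  have hsub1 : Set.Icc (-(1/2):ℝ) 0 ⊆ Set.Icc (-(1/2):ℝ) (1/2) := by
    apply Set.Icc_subset_Icc_right; norm_num
  have hsub2 : Set.Icc (0:ℝ) (1/2) ⊆ Set.Icc (-(1/2):ℝ) (1/2) := by
    apply Set.Icc_subset_Icc_left; norm_num
  have hanti : AntitoneOn f (Set.Icc (-(1/2):ℝ) 0) := by
    apply antitoneOn_of_deriv_nonpos (convex_Icc _ _) (hcont _ hsub1)
    · intro x hx
      rw [interior_Icc] at hx
      exact ((hderiv x (hIcc x (hsub1 (Set.mem_Icc_of_Ioo hx)))).differentiableAt).differentiableWithinAt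
    · intro x hx
      rw [interior_Icc] at hx
      have hx' := hsub1 (Set.mem_Icc_of_Ioo hx)
      rw [(hderiv x (hIcc x hx')).deriv]
      have : f1 x ≤ f1 0 := hmono1 hx' hzero_mem (le_of_lt hx.2)
      linarith [this, hf10.le]
  have hmono : MonotoneOn f (Set.Icc (0:ℝ) (1/2)) := by
    apply monotoneOn_of_deriv_nonneg (convex_Icc _ _) (hcont _ hsub2)
    · intro x hx
      rw [interior_Icc] at hx
      exact ((hderiv x (hIcc x (hsub2 (Set.mem_Icc_of_Ioo hx)))).differentiableAt).differentiableWithinAt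
    · intro x hx
      rw [interior_Icc] at hx
      have hx' := hsub2 (Set.mem_Icc_of_Ioo hx)
      rw [(hderiv x (hIcc x hx')).deriv]
      have : f1 0 ≤ f1 x := hmono1 hzero_mem hx' (le_of_lt hx.1)
      linarith [this, hf10.ge]
  have hf0 : f 0 = 0 := by simp [hf, Real.one_rpow]
  have hfη : 0 ≤ f η := by
    rcases le_total η 0 with h | h
    · have hmem : η ∈ Set.Icc (-(1/2):ℝ) 0 := ⟨hη1, h⟩
      have h0mem : (0:ℝ) ∈ Set.Icc (-(1/2):ℝ) 0 := ⟨by norm_num, le_refl _⟩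
      have := hanti hmem h0mem h
      linarith [hf0.le, this]
    · have hmem : η ∈ Set.Icc (0:ℝ) (1/2) := ⟨h, hη2⟩
      have h0mem : (0:ℝ) ∈ Set.Icc (0:ℝ) (1/2) := ⟨le_refl _, by norm_num⟩
      have := hmono h0mem hmem h
      linarith [hf0.ge, this]
  have h : (1 + η) ^ m - (1 + m * η + C * η ^ 2) ≥ 0 := hfη
  linarith
end

section
/- Let m ∈ (1,2) and let η be a real number with |η| ≤ 1/2. Then (1+η)^m ≤ 1 + m·η + (m(m-1)/2)·3^{2-m}·η². -/
open Real Set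

theorem pointwise_upper_bound_rpow (m η : ℝ) (hm1 : 1 < m) (hm2 : m < 2)
    (hη : |η| ≤ 1 / 2) :
    (1 + η) ^ m ≤ 1 + m * η + (m * (m - 1) / 2) * (3:ℝ) ^ (2 - m) * η ^ 2 := by
  obtain ⟨hη1, hη2⟩ := abs_le.mp hη
  set c : ℝ := (3:ℝ) ^ (2 - m) with hcdef
  have hc1 : (1:ℝ) ≤ c := Real.one_le_rpow (by norm_num) (by linarith)
  set f : ℝ → ℝ := fun t => 1 + m * t + m * (m - 1) / 2 * c * t ^ 2 - (1 + t) ^ m with hf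
  have hderiv : ∀ t : ℝ,
      HasDerivAt f (m + m * (m - 1) * c * t - m * (1 + t) ^ (m - 1)) t := by
    intro t
    have h1 : HasDerivAt (fun t : ℝ => (1 + t) ^ m) (m * (1 + t) ^ (m - 1)) t := by
      have := (Real.hasDerivAt_rpow_const (x := 1 + t) (p := m) (Or.inr hm1.le)).comp t
        ((hasDerivAt_id t).const_add 1)
      exact this.congr_deriv (by simp)
    have h2 : HasDerivAt (fun t : ℝ => 1 + m * t + m * (m - 1) / 2 * c * t ^ 2)
        (m + m * (m - 1) / 2 * c * (2 * t)) t := by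
      have ha : HasDerivAt (fun t : ℝ => m * t) m t := by
        simpa using (hasDerivAt_id t).const_mul m
      have hb : HasDerivAt (fun t : ℝ => t ^ 2) (2 * t) t := by
        simpa using hasDerivAt_pow 2 t
      exact ((ha.const_add 1).add ((hb.const_mul (m * (m - 1) / 2 * c))))
    have := h2.sub h1
    convert this using 1
    all_goals first | rfl | ring
  have hdiff : Differentiable ℝ f := fun t => (hderiv t).differentiableAt
  have hf0 : f 0 = 0 := by simp [hf]
  -- Bernoulli upper bound for exponent m-1 ∈ [0,1]
  have hbern : ∀ s : ℝ, -1 ≤ s → (1 + s) ^ (m - 1) ≤ 1 + (m - 1) * s := fun s hs =>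
    rpow_one_add_le_one_add_mul_self hs (by linarith) (by linarith)
  have key : 0 ≤ f η := by
    rcases le_total 0 η with hpos | hneg
    · -- monotone on [0, 1/2]
      have hmono : MonotoneOn f (Icc 0 (1/2)) := by
        apply monotoneOn_of_deriv_nonneg (convex_Icc _ _)
          hdiff.continuous.continuousOn (hdiff.differentiableOn)
        intro x hx
        rw [interior_Icc, mem_Ioo] at hx
        rw [(hderiv x).deriv]
        have hB := hbern x (by linarith [hx.1])
        have hm0 : 0 < m := by linarith
        nlinarith [mul_nonneg (mul_nonneg (by linarith : (0:ℝ) ≤ m - 1) hx.1.le)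
          (by linarith : (0:ℝ) ≤ c - 1)]
      have := hmono (left_mem_Icc.mpr (by norm_num)) ⟨hpos, hη2⟩ hpos
      linarith [hf0 ▸ this]
    · -- antitone on [-1/2, 0]
      have hanti : AntitoneOn f (Icc (-(1/2)) 0) := by
        apply antitoneOn_of_deriv_nonpos (convex_Icc _ _)
          hdiff.continuous.continuousOn (hdiff.differentiableOn)
        intro x hx
        rw [interior_Icc, mem_Ioo] at hx
        rw [(hderiv x).deriv]
        have hx1 : -(1/2) < x := hx.1
        have hx0 : x < 0 := hx.2
        -- need: 1 + (m-1)*c*x ≤ (1+x)^(m-1)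
        set p := m - 1 with hp
        have hp0 : 0 < p := by linarith
        have hp1 : p ≤ 1 := by linarith
        -- chord inequality for concave x ↦ x^p on [1/2, 1]
        have hconc := Real.concaveOn_rpow hp0.le hp1
        have hchord := hconc.2 (show (1/2:ℝ) ∈ Ici (0:ℝ) by norm_num)
          (show (1:ℝ) ∈ Ici (0:ℝ) by norm_num)
          (show (0:ℝ) ≤ -(2*x) by linarith) (show (0:ℝ) ≤ 1 + 2*x by linarith)
          (show -(2*x) + (1 + 2*x) = 1 by ring)
        simp only [smul_eq_mul, Real.one_rpow, mul_one] at hchord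
        have harg : -(2*x) * (1/2) + (1 + 2*x) = 1 + x := by ring
        rw [harg] at hchord
        -- so (1+x)^p ≥ 1 + 2x - 2x * d with d = (1/2)^p
        set d : ℝ := (1/2:ℝ) ^ p with hddef
        set e : ℝ := (2:ℝ) ^ p with hedef
        have he0 : 0 < e := Real.rpow_pos_of_pos (by norm_num) _
        have hde : d * e = 1 := by
          rw [hddef, hedef, ← Real.mul_rpow (by norm_num) (by norm_num)]
          norm_num
        have hem : e ≤ m := by
          have h := hbern 1 (by norm_num)
          have : ((1:ℝ) + 1) ^ p = e := by norm_num [hedef]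
          rw [this] at h
          linarith
        have h2c : (2:ℝ) ^ (2 - m) ≤ c := by
          exact Real.rpow_le_rpow (by norm_num) (by norm_num) (by linarith)
        have h2e : (2:ℝ) ^ (2 - m) * e = 2 := by
          rw [hedef, ← Real.rpow_add (by norm_num)]
          have : 2 - m + p = 1 := by rw [hp]; ring
          rw [this, Real.rpow_one]
        have hd0 : 0 < d := Real.rpow_pos_of_pos (by norm_num) _
        have h1 : 2 * (1 - d) ≤ (m - 1) * c := by
          have ha : 2 * (1 - d) * e ≤ (m - 1) * (2:ℝ) ^ (2 - m) * e := by
            nlinarith [hde, h2e, hem]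
          have hb := le_of_mul_le_mul_right ha he0
          calc 2 * (1 - d) ≤ (m - 1) * (2:ℝ) ^ (2 - m) := hb
            _ ≤ (m - 1) * c := mul_le_mul_of_nonneg_left h2c (by linarith)
        have hstep : (m - 1) * c * x ≤ 2 * x * (1 - d) := by
          nlinarith [mul_le_mul_of_nonpos_right h1 hx0.le]
        have hfin : 1 + (m - 1) * c * x ≤ (1 + x) ^ p := by
          calc 1 + (m - 1) * c * x ≤ 1 + 2 * x * (1 - d) := by linarith
            _ = -(2*x) * d + (1 + 2*x) := by ring
            _ ≤ (1 + x) ^ p := hchord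
        have hm0 : 0 < m := by linarith
        rw [hp] at hfin ⊢
        nlinarith [mul_le_mul_of_nonneg_left hfin hm0.le]
      have := hanti ⟨hη1, hneg⟩ (right_mem_Icc.mpr (by norm_num)) hneg
      linarith [hf0 ▸ this]
  simp only [hf] at key
  linarith
end

section
/- Let d ≥ 1, m ∈ (1,2), L ≥ 1, ε₀ > 0, and let ρ : 𝕋_L^d → [0,∞) be continuous with ∫ρ dx = 1 and maximum R = ρ(x₀) attained at x₀. Suppose that |∇ρ^{m−1}(x)| ≤ κ₁ ε₀ for a.e. x (in the sense that ρ^{m−1} is κ₁ε₀-Lipschitz). Then R ≤ κ₄ · max{ε₀^{d/(d(m−1)+1)}, L^{−d}} for a constant κ₄ depending only on d, m, κ₁. -/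
noncomputable section
open MeasureTheory
open scoped BigOperators

/-- The box `[-L/2, L/2]^d`, a fundamental domain of the torus `𝕋_L^d`. -/
def box (d : ℕ) (L : ℝ) : Set (EuclideanSpace ℝ (Fin d)) :=
  {x | ∀ i, x i ∈ Set.Ioc (-(L / 2)) (L / 2)}

/-- `f` is `L`-periodic in each coordinate direction (i.e. a function on `𝕋_L^d`). -/
def PeriodicL (d : ℕ) (L : ℝ) (f : EuclideanSpace ℝ (Fin d) → ℝ) : Prop :=
  ∀ (x : EuclideanSpace ℝ (Fin d)) (i : Fin d),
    f (x + L • EuclideanSpace.single i (1:ℝ)) = f x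

/-- Pairing between integer frequency `k` and `x`. -/
def dotZ (d : ℕ) (k : Fin d → ℤ) (x : EuclideanSpace ℝ (Fin d)) : ℝ :=
  ∑ i, (k i : ℝ) * x i

/-- The Fourier coefficient `f̂(k) = ∫_{𝕋_L^d} f(x) e^{-i k·x} dx`,
with `k` ranging over `(2π/L)ℤ^d`. -/
def fCoeff (d : ℕ) (L : ℝ) (f : EuclideanSpace ℝ (Fin d) → ℝ) (k : Fin d → ℤ) : ℂ :=
  ∫ x in box d L,
    (f x : ℂ) * Complex.exp (-Complex.I * ((2 * Real.pi / L : ℝ) : ℂ) * ((dotZ d k x : ℝ) : ℂ))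

/-- Periodic convolution `(V ∗ ρ)(x) = ∫_{𝕋_L^d} V(x−y) ρ(y) dy`. -/
def pconv (d : ℕ) (L : ℝ) (V ρ : EuclideanSpace ℝ (Fin d) → ℝ)
    (x : EuclideanSpace ℝ (Fin d)) : ℝ :=
  ∫ y in box d L, V (x - y) * ρ y

/-! ### Auxiliary lemmas: translation invariance of the box integral for periodic functions -/

/-- The lattice `(Lℤ)^d` as an additive subgroup of `ℝ^d`. -/
def latL (d : ℕ) (L : ℝ) : AddSubgroup (Fin d → ℝ) :=
  AddSubgroup.pi Set.univ (fun _ => AddSubgroup.zmultiples L)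

theorem fundDom_pi (d : ℕ) {L : ℝ} (hL : 0 < L) (c : Fin d → ℝ) :
    IsAddFundamentalDomain (latL d L) (Set.univ.pi fun i => Set.Ioc (c i) (c i + L)) := by
  refine IsAddFundamentalDomain.mk'
    ((MeasurableSet.univ_pi fun i => measurableSet_Ioc).nullMeasurableSet) fun x => ?_
  have h1 : ∀ i : Fin d, ∃! m : ℤ, x i + m • L ∈ Set.Ioc (c i) (c i + L) := fun i =>
    existsUnique_add_zsmul_mem_Ioc hL (x i) (c i)
  choose m hm hu using h1
  refine ⟨⟨fun i => m i • L, fun i _ => ⟨m i, rfl⟩⟩, ?_, ?_⟩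
  · intro i _
    show (fun i => m i • L) i + x i ∈ _
    simpa [add_comm] using hm i
  · rintro ⟨g, hg⟩ hgx
    ext i
    obtain ⟨k, hk⟩ := hg i (Set.mem_univ i)
    have := hgx i (Set.mem_univ i)
    show g i = m i • L
    rw [← hk]
    congr 1
    apply hu i
    have : g i + x i ∈ Set.Ioc (c i) (c i + L) := this
    rw [← hk] at this
    simpa [add_comm] using this

instance latL.countable (d : ℕ) (L : ℝ) : Countable (latL d L) := by
  have h1 : ((AddSubgroup.zmultiples L : AddSubgroup ℝ) : Set ℝ).Countable := by
    have := Set.countable_range (fun k : ℤ => k • L)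
    convert this using 1
    ext y; simp [AddSubgroup.mem_zmultiples_iff]
  have h2 : ((latL d L : AddSubgroup (Fin d → ℝ)) : Set (Fin d → ℝ)).Countable := by
    rw [latL, AddSubgroup.coe_pi]
    exact Set.countable_univ_pi fun i => h1
  exact h2.to_subtype

theorem invariant_of_periodic (d : ℕ) {L : ℝ} (f : (Fin d → ℝ) → ℝ)
    (hper : ∀ (x : Fin d → ℝ) (i : Fin d), f (x + L • (Pi.single i (1:ℝ) : Fin d → ℝ)) = f x)
    (g : latL d L) (x : Fin d → ℝ) : f (g +ᵥ x) = f x := by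
  have claim1 : ∀ (i : Fin d) (k : ℤ) (y : Fin d → ℝ),
      f (y + k • (L • (Pi.single i (1:ℝ) : Fin d → ℝ))) = f y := by
    intro i k
    induction k using Int.induction_on with
    | zero => simp
    | succ n ih =>
        intro y
        have h2 := ih (y + L • (Pi.single i (1:ℝ) : Fin d → ℝ))
        rw [hper] at h2
        rw [← h2]; congr 1; push_cast [add_smul]; abel
    | pred n ih =>
        intro y
        have h2 := hper (y + (-(n:ℤ)-1) • (L • (Pi.single i (1:ℝ) : Fin d → ℝ))) i
        have hv : y + (-(n:ℤ)-1) • (L • (Pi.single i (1:ℝ) : Fin d → ℝ))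
              + L • (Pi.single i (1:ℝ) : Fin d → ℝ)
            = y + (-(n:ℤ)) • (L • (Pi.single i (1:ℝ) : Fin d → ℝ)) := by
          push_cast [sub_smul, neg_smul, one_smul]; abel
        rw [hv] at h2
        rw [← h2, ih]
  have claim2 : ∀ (s : Finset (Fin d)) (c : Fin d → ℤ) (y : Fin d → ℝ),
      f (y + ∑ i ∈ s, (c i) • (L • (Pi.single i (1:ℝ) : Fin d → ℝ))) = f y := by
    intro s
    induction s using Finset.induction_on with
    | empty => simp
    | @insert a s hne ih =>
        intro c y
        rw [Finset.sum_insert hne, ← add_assoc]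
        have h4 : y + (c a) • (L • (Pi.single a (1:ℝ) : Fin d → ℝ))
              + ∑ i ∈ s, (c i) • (L • (Pi.single i (1:ℝ) : Fin d → ℝ))
            = (y + (c a) • (L • (Pi.single a (1:ℝ) : Fin d → ℝ)))
              + ∑ i ∈ s, (c i) • (L • (Pi.single i (1:ℝ) : Fin d → ℝ)) := by
          abel
        rw [h4, ih, claim1]
  obtain ⟨g, hg⟩ := g
  choose k hk using fun i => hg i (Set.mem_univ i)
  show f (g + x) = f x
  have hgsum : g = ∑ i, (k i) • (L • (Pi.single i (1:ℝ) : Fin d → ℝ)) := by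
    have h5 : ∀ i, (k i) • (L • (Pi.single i (1:ℝ) : Fin d → ℝ)) = Pi.single i (g i) := by
      intro i
      rw [← hk i, ← Pi.single_smul, ← Pi.single_smul]
      norm_num
    rw [Finset.sum_congr rfl fun i _ => h5 i, Finset.univ_sum_single]
  rw [add_comm, hgsum, claim2]

theorem box_integral_translate (d : ℕ) {L : ℝ} (hL : 0 < L) (f : (Fin d → ℝ) → ℝ)
    (hper : ∀ (x : Fin d → ℝ) (i : Fin d), f (x + L • (Pi.single i (1:ℝ) : Fin d → ℝ)) = f x)
    (c c' : Fin d → ℝ) :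
    ∫ x in Set.univ.pi fun i => Set.Ioc (c i) (c i + L), f x
      = ∫ x in Set.univ.pi fun i => Set.Ioc (c' i) (c' i + L), f x :=
  (fundDom_pi d hL c).setIntegral_eq (fundDom_pi d hL c')
    (invariant_of_periodic d f hper)

/-- A priori bound on the maximum of a stationary-type density: if `ρ^{m−1}` is
`κ₁ε₀`-Lipschitz and `ρ` has unit mass on `𝕋_L^d`, then its maximum `R = ρ(x₀)`
satisfies `R ≤ κ₄ max{ε₀^{d/(d(m−1)+1)}, L^{−d}}` with `κ₄ = κ₄(d, m, κ₁)`. -/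
theorem max_bound_of_lipschitz_pressure (d : ℕ) (hd : 1 ≤ d) (m : ℝ)
    (hm1 : 1 < m) (hm2 : m < 2) (κ₁ : ℝ) (hκ₁ : 0 < κ₁) :
    ∃ κ₄ : ℝ, 0 < κ₄ ∧
      ∀ (L ε₀ : ℝ), 1 ≤ L → 0 < ε₀ →
      ∀ ρ : EuclideanSpace ℝ (Fin d) → ℝ, Continuous ρ → PeriodicL d L ρ →
        (∀ x, 0 ≤ ρ x) → (∫ x in box d L, ρ x) = 1 →
        ∀ x₀ : EuclideanSpace ℝ (Fin d), (∀ x, ρ x ≤ ρ x₀) →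
        LipschitzWith (Real.toNNReal (κ₁ * ε₀)) (fun x => ρ x ^ (m - 1)) →
        ρ x₀ ≤ κ₄ * max (ε₀ ^ ((d : ℝ) / ((d : ℝ) * (m - 1) + 1))) (L ^ (-(d : ℝ))) := by
  have hdR : (0:ℝ) < (d:ℝ) := by exact_mod_cast hd
  set p : ℝ := m - 1 with hp_def
  have hp : 0 < p := by simp only [hp_def]; linarith
  set β : ℝ := (d:ℝ) * p + 1 with hβ_def
  have hβ : 0 < β := by positivity
  have hsd : 0 < Real.sqrt d := Real.sqrt_pos.mpr hdR
  set C₁ : ℝ := 2 ^ (1/p) with hC₁_def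
  have hC₁pos : 0 < C₁ := Real.rpow_pos_of_pos two_pos _
  set C₂ : ℝ := (C₁ * (κ₁ * Real.sqrt d) ^ d) ^ (1/β) with hC₂_def
  have hC₂pos : 0 < C₂ := Real.rpow_pos_of_pos (by positivity) _
  refine ⟨max C₁ C₂, lt_max_of_lt_left hC₁pos, ?_⟩
  intro L ε₀ hL hε ρ hcont hper hpos hint x₀ hmax hlip
  have hLpos : 0 < L := lt_of_lt_of_le one_pos hL
  set R : ℝ := ρ x₀ with hR_def
  have hR0 : 0 ≤ R := hpos x₀
  set M : ℝ := max (ε₀ ^ ((d : ℝ) / β)) (L ^ (-(d : ℝ))) with hM_def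
  have hMpos : 0 < M := lt_max_of_lt_left (Real.rpow_pos_of_pos hε _)
  rcases hR0.eq_or_lt with h0 | hRpos
  · exact le_of_lt (h0 ▸ mul_pos (lt_max_of_lt_left hC₁pos) hMpos)
  set K : ℝ := κ₁ * ε₀ with hK_def
  have hKpos : 0 < K := mul_pos hκ₁ hε
  set A : ℝ := R ^ p / (2 * K * Real.sqrt d) with hA_def
  have hRp : 0 < R ^ p := Real.rpow_pos_of_pos hRpos _
  have hApos : 0 < A := by positivity
  set t : ℝ := min A (L/2) with ht_def
  have htpos : 0 < t := lt_min hApos (by linarith)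
  have htL : t ≤ L/2 := min_le_right _ _
  have htA : t ≤ A := min_le_left _ _
  -- pointwise lower bound on the cube of half-side t around x₀
  have hlow : ∀ y : EuclideanSpace ℝ (Fin d), (∀ i, |y i - x₀ i| ≤ t) → R / C₁ ≤ ρ y := by
    intro y hy
    have hdist : dist y x₀ ≤ Real.sqrt d * t := by
      rw [EuclideanSpace.dist_eq]
      have h1 : ∑ i, dist (y i) (x₀ i) ^ 2 ≤ (d:ℝ) * t ^ 2 := by
        calc ∑ i, dist (y i) (x₀ i) ^ 2 ≤ ∑ _i : Fin d, t ^ 2 := by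
              refine Finset.sum_le_sum fun i _ => ?_
              have := hy i
              rw [Real.dist_eq]
              nlinarith [abs_nonneg (y i - x₀ i)]
          _ = (d:ℝ) * t ^ 2 := by simp [Finset.card_univ, mul_comm]
      calc Real.sqrt (∑ i, dist (y i) (x₀ i) ^ 2) ≤ Real.sqrt ((d:ℝ) * t ^ 2) :=
            Real.sqrt_le_sqrt h1
        _ = Real.sqrt d * t := by
            rw [Real.sqrt_mul hdR.le, Real.sqrt_sq htpos.le]
    have hlip' := hlip.dist_le_mul y x₀
    rw [Real.coe_toNNReal _ hKpos.le] at hlip'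
    have h2 : R ^ p - ρ y ^ p ≤ K * (Real.sqrt d * t) := by
      have h3 : R ^ p - ρ y ^ p ≤ dist (ρ y ^ p) (R ^ p) := by
        rw [Real.dist_eq, abs_sub_comm]
        exact le_abs_self _
      calc R ^ p - ρ y ^ p ≤ dist (ρ y ^ p) (R ^ p) := h3
        _ ≤ K * dist y x₀ := hlip'
        _ ≤ K * (Real.sqrt d * t) := by
            exact mul_le_mul_of_nonneg_left hdist hKpos.le
    have h4 : K * (Real.sqrt d * t) ≤ R ^ p / 2 := by
      have : K * (Real.sqrt d * t) ≤ K * (Real.sqrt d * A) :=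
        mul_le_mul_of_nonneg_left (mul_le_mul_of_nonneg_left htA hsd.le) hKpos.le
      calc K * (Real.sqrt d * t) ≤ K * (Real.sqrt d * A) := this
        _ = R ^ p / 2 := by
            rw [hA_def]; field_simp
    have h5 : R ^ p / 2 ≤ ρ y ^ p := by linarith
    have h6 : (R ^ p / 2) ^ (1/p) ≤ (ρ y ^ p) ^ (1/p) :=
      Real.rpow_le_rpow (by positivity) h5 (by positivity)
    have h7 : (ρ y ^ p) ^ (1/p) = ρ y := by
      rw [one_div]
      exact Real.rpow_rpow_inv (hpos y) hp.ne'
    have h8 : (R ^ p / 2) ^ (1/p) = R / C₁ := by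
      rw [Real.div_rpow hRp.le (by norm_num), one_div,
        Real.rpow_rpow_inv hR0 hp.ne', hC₁_def, one_div]
    rw [← h7, ← h8]
    exact h6
  -- transfer the integral to the pi space and translate the box
  set e := (MeasurableEquiv.toLp 2 (Fin d → ℝ)).symm with he_def
  set f : (Fin d → ℝ) → ℝ := fun y => ρ (e.symm y) with hf_def
  have hfc : Continuous f := hcont.comp (EuclideanSpace.equiv (Fin d) ℝ).symm.continuous
  have hfnn : ∀ y, 0 ≤ f y := fun y => hpos _
  have hperf : ∀ (x : Fin d → ℝ) (i : Fin d),
      f (x + L • (Pi.single i (1:ℝ) : Fin d → ℝ)) = f x := fun x i => by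
    convert hper (WithLp.toLp 2 x) i using 2
    · ext j; simp [e, EuclideanSpace.single_apply, Pi.single_apply]
    · rfl
  have htrans : ∀ s : Set (Fin d → ℝ),
      (∫ x in e ⁻¹' s, ρ x) = ∫ y in s, f y := fun s =>
    (EuclideanSpace.volume_preserving_symm_measurableEquiv_toLp (Fin d)).setIntegral_preimage_emb
      e.measurableEmbedding f s
  have hbox : box d L = e ⁻¹' (Set.univ.pi fun i =>
      Set.Ioc ((fun _ : Fin d => -(L/2)) i) ((fun _ : Fin d => -(L/2)) i + L)) := by
    have hL2 : -(L/2) + L = L/2 := by ring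
    ext x
    simp only [box, Set.mem_setOf_eq, Set.mem_preimage, Set.mem_pi, Set.mem_univ,
      forall_true_left, hL2]
    rfl
  -- integrability of f on any translated box
  have hintf : ∀ c : Fin d → ℝ,
      IntegrableOn f (Set.univ.pi fun i => Set.Ioc (c i) (c i + L)) := by
    intro c
    have hcomp : IsCompact (Set.univ.pi fun i => Set.Icc (c i) (c i + L)) :=
      isCompact_univ_pi fun i => isCompact_Icc
    exact (hfc.locallyIntegrable.integrableOn_isCompact hcomp).mono_set
      (Set.pi_mono fun i _ => Set.Ioc_subset_Icc_self)
  -- the mass bound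
  have hmass : (R / C₁) * (2*t)^d ≤ 1 := by
    have h10 : (∫ y in Set.univ.pi fun i =>
        Set.Ioc ((x₀ i - L/2 : ℝ)) ((x₀ i - L/2) + L), f y) = 1 := by
      rw [box_integral_translate d hLpos f hperf _ (fun _ => -(L/2)), ← htrans, ← hbox, hint]
    set cube : Set (Fin d → ℝ) := Set.univ.pi fun i => Set.Ioc (x₀ i - t) (x₀ i + t)
      with hcube_def
    have hsub : cube ⊆ Set.univ.pi fun i => Set.Ioc ((x₀ i - L/2 : ℝ)) ((x₀ i - L/2) + L) := by
      refine Set.pi_mono fun i _ => Set.Ioc_subset_Ioc (by linarith) (by linarith)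
    have h11 : (∫ y in cube, f y) ≤ 1 := by
      rw [← h10]
      refine setIntegral_mono_set (hintf _) ?_ (HasSubset.Subset.eventuallyLE hsub)
      exact Filter.Eventually.of_forall hfnn
    have hcubemeas : MeasurableSet cube := MeasurableSet.univ_pi fun i => measurableSet_Ioc
    have hvol : volume cube = ENNReal.ofReal (2*t) ^ d := by
      rw [hcube_def, volume_pi_pi]
      simp only [Real.volume_Ioc]
      have : ∀ i : Fin d, x₀ i + t - (x₀ i - t) = 2*t := fun i => by ring
      rw [Finset.prod_congr rfl fun i _ => by rw [this i]]
      simp [Finset.card_univ]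
    have hvolne : volume cube ≠ ⊤ := by
      rw [hvol]; exact ENNReal.pow_ne_top ENNReal.ofReal_ne_top
    have h12 : (R / C₁) * volume.real cube ≤ ∫ y in cube, f y := by
      rw [mul_comm, ← smul_eq_mul]
      refine setIntegral_ge_of_const_le hcubemeas hvolne ?_ ((hintf _).mono_set hsub)
      intro y hy
      refine hlow (WithLp.toLp 2 y) fun i => ?_
      have := hy i (Set.mem_univ i)
      rw [abs_le]
      exact ⟨by linarith [this.1], by linarith [this.2]⟩
    have h13 : volume.real cube = (2*t)^d := by
      rw [Measure.real, hvol, ENNReal.toReal_pow, ENNReal.toReal_ofReal (by linarith)]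
    rw [h13] at h12
    linarith
  -- final algebra
  have hC₁M : ∀ X : ℝ, X ≤ M → C₁ ≤ max C₁ C₂ → True := fun _ _ _ => trivial
  rcases min_cases A (L/2) with ⟨hmin, hAL⟩ | ⟨hmin, hLA⟩
  · -- t = A: the ε₀ bound
    have h2t : t = A := hmin
    have h20 : (R / C₁) * (2*A)^d ≤ 1 := by rw [← h2t]; exact hmass
    have h2A : 2*A = R ^ p / (K * Real.sqrt d) := by rw [hA_def]; field_simp
    have h21 : R * (R ^ p) ^ d ≤ C₁ * (K * Real.sqrt d) ^ d := by
      have h22 : R * (2*A)^d ≤ C₁ := by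
        rw [div_mul_eq_mul_div, div_le_one hC₁pos] at h20
        exact h20
      have h23 : (2*A)^d * (K * Real.sqrt d)^d = (R ^ p) ^ d := by
        rw [← mul_pow, h2A]
        congr 1
        field_simp
      calc R * (R ^ p) ^ d = (R * (2*A)^d) * (K * Real.sqrt d)^d := by
            rw [mul_assoc, h23]
        _ ≤ C₁ * (K * Real.sqrt d)^d :=
            mul_le_mul_of_nonneg_right h22 (by positivity)
    have h24 : R ^ β ≤ C₁ * (κ₁ * Real.sqrt d) ^ d * ε₀ ^ d := by
      have h25 : R ^ β = R * (R ^ p) ^ d := by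
        rw [hβ_def, ← Real.rpow_natCast (R ^ p) d, ← Real.rpow_mul hR0,
          Real.rpow_add hRpos, Real.rpow_one, mul_comm p (d:ℝ)]
        ring
      have h26 : (K * Real.sqrt d) ^ d = (κ₁ * Real.sqrt d) ^ d * ε₀ ^ d := by
        rw [← mul_pow, hK_def]; ring_nf
      rw [h25, ← mul_assoc] at *
      calc R * (R ^ p) ^ d ≤ C₁ * (K * Real.sqrt d) ^ d := h21
        _ = C₁ * (κ₁ * Real.sqrt d) ^ d * ε₀ ^ d := by rw [h26, mul_assoc]
    have h27 : R ≤ C₂ * ε₀ ^ ((d:ℝ) / β) := by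
      have h28 : (R ^ β) ^ (1/β) ≤ (C₁ * (κ₁ * Real.sqrt d) ^ d * ε₀ ^ d) ^ (1/β) :=
        Real.rpow_le_rpow (by positivity) h24 (by positivity)
      have h29 : (R ^ β) ^ (1/β) = R := by
        rw [one_div]; exact Real.rpow_rpow_inv hR0 hβ.ne'
      have h30 : (C₁ * (κ₁ * Real.sqrt d) ^ d * ε₀ ^ d) ^ (1/β)
          = C₂ * ε₀ ^ ((d:ℝ) / β) := by
        rw [Real.mul_rpow (by positivity) (by positivity), hC₂_def]
        congr 1
        rw [← Real.rpow_natCast ε₀ d, ← Real.rpow_mul hε.le]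
        congr 1
        field_simp
      rw [h29, h30] at h28
      exact h28
    calc R ≤ C₂ * ε₀ ^ ((d:ℝ) / β) := h27
      _ ≤ max C₁ C₂ * M := by
          refine mul_le_mul (le_max_right _ _) (le_max_left _ _) (by positivity)
            (le_trans hC₂pos.le (le_max_right _ _))
  · -- t = L/2: the L^{-d} bound
    have h20 : (R / C₁) * L^d ≤ 1 := by
      have h2t : t = L/2 := hmin
      have := hmass
      rw [h2t] at this
      have hLL : 2*(L/2) = L := by ring
      rwa [hLL] at this
    have h21 : R ≤ C₁ * L ^ (-(d:ℝ)) := by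
      have hLd : (0:ℝ) < L^d := by positivity
      rw [div_mul_eq_mul_div, div_le_one hC₁pos] at h20
      have h22 : R ≤ C₁ / L^d := by
        rw [le_div_iff₀ hLd]
        exact h20
      have h23 : L ^ (-(d:ℝ)) = (L^d)⁻¹ := by
        rw [Real.rpow_neg hLpos.le, Real.rpow_natCast]
      rw [h23, ← div_eq_mul_inv]
      exact h22
    calc R ≤ C₁ * L ^ (-(d:ℝ)) := h21
      _ ≤ max C₁ C₂ * M := by
          refine mul_le_mul (le_max_left _ _) (le_max_right _ _) (by positivity)
            (le_trans hC₁pos.le (le_max_left _ _))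
end
end
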